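/- In the monoid DORPₙ of monotone order-decreasing partial transformations of [n], an element is regular if and only if it is an idempotent. In particular DORPₙ is not a regular semigroup for n ≥ 2. -/

import Mathlib

/-- A partial transformation of the chain `[n]` (elements of `Fin n`). -/
def PT (n : ℕ) := Fin n → Option (Fin n)

/-- Right-to-left composition: `x (ρσ) = (x ρ) σ`. -/
def comp {n : ℕ} (ρ σ : PT n) : PT n := fun x => (ρ x).bind σ

/-- The identity partial transformation. -/
def idPT (n : ℕ) : PT n := fun x => some x

/-- Isotone (order-preserving) on its domain. -/
def IsIsotone {n : ℕ} (ρ : PT n) : Prop :=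
  ∀ x x' y y' : Fin n, ρ x = some y → ρ x' = some y' → x ≤ x' → y ≤ y'

/-- Antitone (order-reversing) on its domain. -/
def IsAntitone {n : ℕ} (ρ : PT n) : Prop :=
  ∀ x x' y y' : Fin n, ρ x = some y → ρ x' = some y' → x ≤ x' → y' ≤ y

/-- Order-decreasing on its domain. -/
def IsDecreasing {n : ℕ} (ρ : PT n) : Prop :=
  ∀ x y : Fin n, ρ x = some y → y ≤ x

/-- Member of the monoid `DORPₙ`: monotone and order-decreasing. -/
def IsDORP {n : ℕ} (ρ : PT n) : Prop :=
  IsDecreasing ρ ∧ (IsIsotone ρ ∨ IsAntitone ρ)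

/-- The image of a partial transformation. -/
def im {n : ℕ} (ρ : PT n) : Set (Fin n) := {y | ∃ x, ρ x = some y}

/-- The domain of a partial transformation. -/
def domSet {n : ℕ} (ρ : PT n) : Set (Fin n) := {x | ρ x ≠ none}

/-- The height of a partial transformation: the size of its image. -/
noncomputable def height {n : ℕ} (ρ : PT n) : ℕ := (im ρ).ncard

/-- Equality of kernels: same domain and the same partition into fibers. -/
def kerEq {n : ℕ} (ρ σ : PT n) : Prop :=
  (∀ x, ρ x = none ↔ σ x = none) ∧ (∀ x y, ρ x = ρ y ↔ σ x = σ y)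

/-- In `DORPₙ` an element is regular iff it is idempotent; in particular for `n ≥ 2`
`DORPₙ` is not a regular semigroup. -/
theorem stmt9 (n : ℕ) :
    (∀ ρ : PT n, IsDORP ρ →
        ((∃ τ, IsDORP τ ∧ comp (comp ρ τ) ρ = ρ) ↔ comp ρ ρ = ρ)) ∧
      (2 ≤ n → ∃ ρ : PT n, IsDORP ρ ∧ ¬∃ τ, IsDORP τ ∧ comp (comp ρ τ) ρ = ρ) := by
  have main : ∀ ρ : PT n, IsDORP ρ →
      ((∃ τ, IsDORP τ ∧ comp (comp ρ τ) ρ = ρ) ↔ comp ρ ρ = ρ) := by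
    intro ρ hρ
    constructor
    · rintro ⟨τ, hτ, heq⟩
      funext x
      cases hx : ρ x with
      | none => simp [comp, hx]; rfl
      | some y =>
        have h1 := congrFun heq x
        simp only [comp, hx, Option.bind_some] at h1 ⊢
        change (τ y).bind ρ = some y at h1; change ρ y = some y
        cases hy : τ y with
        | none => rw [hy] at h1; change (none : Option (Fin n)) = some y at h1; simp at h1
        | some z =>
          rw [hy] at h1
          change ρ z = some y at h1
          have hzy : z ≤ y := hτ.1 y z hy
          have hyz : y ≤ z := hρ.1 z y h1
          rw [le_antisymm hzy hyz] at h1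
          exact h1
    · intro h
      exact ⟨ρ, hρ, by rw [h]; exact h⟩
  refine ⟨main, fun hn => ?_⟩
  have h0 : 0 < n := by omega
  have h1 : 1 < n := by omega
  set ρ : PT n := fun x => if x = ⟨1, h1⟩ then some ⟨0, h0⟩ else none with hρdef
  have hdorp : IsDORP ρ := by
    constructor
    · intro x y hxy
      simp only [hρdef] at hxy
      split at hxy
      · rename_i hx
        cases hxy
        subst hx
        exact Fin.mk_le_mk.mpr (by omega)
      · exact absurd hxy (by simp)
    · left
      intro x x' y y' hxy hxy' _
      simp only [hρdef] at hxy hxy'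
      split at hxy <;> split at hxy' <;> simp_all
  refine ⟨ρ, hdorp, fun hreg => ?_⟩
  have hid := (main ρ hdorp).mp hreg
  have := congrFun hid ⟨1, h1⟩
  simp only [comp, hρdef] at this
  simp [Fin.ext_iff] at this
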